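/- Let P be an additive category and consider a linear system in the Freyd category A(P): morphisms [α_ij] : (A_i ← R_{A_i}) → (B_j ← R_{B_j}), [β_ij] : (C_j ← R_{C_j}) → (D_i ← R_{D_i}), and [γ_i] : (A_i ← R_{A_i}) → (D_i ← R_{D_i}) of A(P), for 1 ≤ i ≤ m and 1 ≤ j ≤ n, with structure morphisms ρ_{A_i}, ρ_{B_j}, ρ_{C_j}, ρ_{D_i}. Then there exists a family of morphisms X_j : (B_j ← R_{B_j}) → (C_j ← R_{C_j}) in A(P) with Σ_{j=1}^n [β_ij] ∘ X_j ∘ [α_ij] = [γ_i] for all i, if and only if there exist morphisms X_j^1 : B_j → C_j, X_j^2 : R_{B_j} → R_{C_j}, and Z_i : A_i → R_{D_i} in P satisfying ρ_{C_j} ∘ X_j^2 = X_j^1 ∘ ρ_{B_j} for all j and Σ_{j=1}^n β_ij ∘ X_j^1 ∘ α_ij = γ_i + ρ_{D_i} ∘ Z_i for all i (where α_ij, β_ij, γ_i denote chosen representatives). -/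

import Mathlib

open CategoryTheory Limits Opposite

set_option linter.unusedSectionVars false

universe v u

/-- An object of the Freyd category of `P`: a morphism `ρ : R ⟶ A` of `P`,
thought of as "the object `A` with relations `R`". -/
structure FreydObj (P : Type u) [CategoryTheory.Category.{v} P] : Type max u v where
  R : P
  A : P
  ρ : R ⟶ A

namespace FreydObj

variable {P : Type u} [Category.{v} P] [Preadditive P]

/-- The "pre-Freyd" category: morphisms are morphism data admitting a witness;
the Freyd category is its quotient by the relation of having a homotopy `λ`. -/
instance : Category.{v} (FreydObj P) where
  Hom X Y := {α : X.A ⟶ Y.A // ∃ w : X.R ⟶ Y.R, X.ρ ≫ α = w ≫ Y.ρ}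
  id X := ⟨𝟙 X.A, ⟨𝟙 X.R, by simp⟩⟩
  comp {X Y Z} f g := ⟨f.1 ≫ g.1, by
    obtain ⟨w, hw⟩ := f.2
    obtain ⟨v, hv⟩ := g.2
    refine ⟨w ≫ v, ?_⟩
    rw [← Category.assoc, hw, Category.assoc, hv, Category.assoc]⟩
  id_comp f := Subtype.ext (Category.id_comp _)
  comp_id f := Subtype.ext (Category.comp_id _)
  assoc f g h := Subtype.ext (Category.assoc _ _ _)

@[simp] lemma comp_val {X Y Z : FreydObj P} (f : X ⟶ Y) (g : Y ⟶ Z) :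
    (f ≫ g).1 = f.1 ≫ g.1 := rfl

@[simp] lemma id_val (X : FreydObj P) : (𝟙 X : X ⟶ X).1 = 𝟙 X.A := rfl

instance homAdd (X Y : FreydObj P) : Add (X ⟶ Y) :=
  ⟨fun f g => ⟨f.1 + g.1, by
    obtain ⟨w, hw⟩ := f.2
    obtain ⟨v, hv⟩ := g.2
    exact ⟨w + v, by rw [Preadditive.comp_add, Preadditive.add_comp, hw, hv]⟩⟩⟩

instance homZero (X Y : FreydObj P) : Zero (X ⟶ Y) := ⟨⟨0, ⟨0, by simp⟩⟩⟩

instance homNeg (X Y : FreydObj P) : Neg (X ⟶ Y) :=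
  ⟨fun f => ⟨-f.1, by
    obtain ⟨w, hw⟩ := f.2
    exact ⟨-w, by rw [Preadditive.comp_neg, Preadditive.neg_comp, hw]⟩⟩⟩

@[simp] lemma add_val {X Y : FreydObj P} (f g : X ⟶ Y) : (f + g).1 = f.1 + g.1 := rfl
@[simp] lemma zero_val (X Y : FreydObj P) : (0 : X ⟶ Y).1 = 0 := rfl
@[simp] lemma neg_val {X Y : FreydObj P} (f : X ⟶ Y) : (-f).1 = -f.1 := rfl

instance homAddCommGroup (X Y : FreydObj P) : AddCommGroup (X ⟶ Y) where
  add_assoc f g h := Subtype.ext (add_assoc f.1 g.1 h.1)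
  zero_add f := Subtype.ext (zero_add f.1)
  add_zero f := Subtype.ext (add_zero f.1)
  add_comm f g := Subtype.ext (add_comm f.1 g.1)
  neg_add_cancel f := Subtype.ext (neg_add_cancel f.1)
  nsmul := nsmulRec
  zsmul := zsmulRec

instance : Preadditive (FreydObj P) where
  add_comp _ _ _ f f' g := Subtype.ext (by simp [Preadditive.add_comp])
  comp_add _ _ _ f g g' := Subtype.ext (by simp [Preadditive.comp_add])

end FreydObj

/-- Two morphism data are identified in the Freyd category iff their difference
factors through the relations of the target. -/
def freydRel (P : Type u) [Category.{v} P] [Preadditive P] : HomRel (FreydObj P) :=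
  fun {X Y} f g => ∃ l : X.A ⟶ Y.R, l ≫ Y.ρ = f.1 - g.1

instance freydRel_congruence (P : Type u) [Category.{v} P] [Preadditive P] :
    Congruence (freydRel P) where
  equivalence :=
    { refl := fun f => ⟨0, by simp⟩
      symm := fun {f g} h => by
        obtain ⟨l, hl⟩ := h
        exact ⟨-l, by rw [Preadditive.neg_comp, hl]; abel⟩
      trans := fun {f g h} h₁ h₂ => by
        obtain ⟨l₁, hl₁⟩ := h₁
        obtain ⟨l₂, hl₂⟩ := h₂
        exact ⟨l₁ + l₂, by rw [Preadditive.add_comp, hl₁, hl₂]; abel⟩ }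
  comp_left := by
    intro _ _ _ f g g' h
    obtain ⟨l, hl⟩ := h
    exact ⟨f.1 ≫ l, by rw [Category.assoc, hl, Preadditive.comp_sub]; rfl⟩
  comp_right := by
    intro _ _ _ f f' g h
    obtain ⟨l, hl⟩ := h
    obtain ⟨w, hw⟩ := g.2
    exact ⟨l ≫ w, by
      rw [Category.assoc, ← hw, ← Category.assoc, hl, Preadditive.sub_comp]; rfl⟩

/-- The Freyd category of an additive category `P`. -/
abbrev Freyd (P : Type u) [Category.{v} P] [Preadditive P] :=
  CategoryTheory.Quotient (freydRel P)

noncomputable instance (P : Type u) [Category.{v} P] [Preadditive P] :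
    Preadditive (Freyd P) :=
  CategoryTheory.Quotient.preadditive (freydRel P) (by
    rintro X Y f₁ f₂ g₁ g₂ ⟨l₁, hl₁⟩ ⟨l₂, hl₂⟩
    exact ⟨l₁ + l₂, by
      rw [Preadditive.add_comp, hl₁, hl₂]
      show _ = (f₁ + g₁).1 - (f₂ + g₂).1
      simp only [FreydObj.add_val]
      abel⟩)

/-- The projection functor from the pre-Freyd category to the Freyd category. -/
abbrev Freyd.Q (P : Type u) [Category.{v} P] [Preadditive P] :
    FreydObj P ⥤ Freyd P :=
  CategoryTheory.Quotient.functor (freydRel P)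

/-- `P` has weak kernels. -/
def HasWeakKernels (P : Type u) [Category.{v} P] [Preadditive P] : Prop :=
  ∀ ⦃A B : P⦄ (f : A ⟶ B), ∃ (K : P) (κ : K ⟶ A), κ ≫ f = 0 ∧
    ∀ ⦃T : P⦄ (τ : T ⟶ A), τ ≫ f = 0 → ∃ u : T ⟶ K, u ≫ κ = τ

/-- a linear system in the Freyd category `A(P)` (given by representatives
`α i j`, `β i j`, `γ i` in the pre-Freyd category) has a solution if and only if the
associated linear system in `P` (with extra unknowns `X₂` for the witnesses of
well-definedness and `Z` for the witnesses of the equations) has a solution. -/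
theorem freyd_linear_system (P : Type u) [Category.{v} P] [Preadditive P] (m n : ℕ)
    (A D : Fin m → FreydObj P) (B C : Fin n → FreydObj P)
    (α : ∀ i j, A i ⟶ B j) (β : ∀ i j, C j ⟶ D i) (γ : ∀ i, A i ⟶ D i) :
    (∃ X : ∀ j, (Freyd.Q P).obj (B j) ⟶ (Freyd.Q P).obj (C j),
      ∀ i, (∑ j, (Freyd.Q P).map (α i j) ≫ X j ≫ (Freyd.Q P).map (β i j)) =
        (Freyd.Q P).map (γ i)) ↔
    (∃ (X₁ : ∀ j, (B j).A ⟶ (C j).A) (X₂ : ∀ j, (B j).R ⟶ (C j).R)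
        (Z : ∀ i, (A i).A ⟶ (D i).R),
      (∀ j, (B j).ρ ≫ X₁ j = X₂ j ≫ (C j).ρ) ∧
      (∀ i, (∑ j, (α i j).1 ≫ X₁ j ≫ (β i j).1) = (γ i).1 + Z i ≫ (D i).ρ)) := by
  have Qadd : ∀ {X Y : FreydObj P} (f g : X ⟶ Y),
      (Freyd.Q P).map (f + g) = (Freyd.Q P).map f + (Freyd.Q P).map g := fun _ _ => rfl
  have Qsum : ∀ {X Y : FreydObj P} (g : Fin n → (X ⟶ Y)),
      (Freyd.Q P).map (∑ j, g j) = ∑ j, (Freyd.Q P).map (g j) := by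
    intro X Y g
    exact map_sum (AddMonoidHom.mk' (fun f => (Freyd.Q P).map f) (fun f g => Qadd f g)) g _
  have valsum : ∀ {X Y : FreydObj P} (g : Fin n → (X ⟶ Y)),
      (∑ j, g j).1 = ∑ j, (g j).1 := by
    intro X Y g
    exact map_sum (AddMonoidHom.mk' (fun f : X ⟶ Y => f.1) (fun _ _ => rfl)) g _
  constructor
  · rintro ⟨X, hX⟩
    choose f hf using fun j => (Freyd.Q P).map_surjective (X j)
    choose w hw using fun j => (f j).2
    have key : ∀ i, freydRel P (∑ j, α i j ≫ f j ≫ β i j) (γ i) := by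
      intro i
      rw [← Quotient.functor_map_eq_iff (freydRel P), Qsum]
      simp only [Functor.map_comp, hf]
      exact hX i
    choose l hl using key
    refine ⟨fun j => (f j).1, w, l, hw, fun i => ?_⟩
    have := hl i
    simp only [valsum, FreydObj.comp_val] at this ⊢
    rw [this]
    abel
  · rintro ⟨X₁, X₂, Z, h₁, h₂⟩
    refine ⟨fun j => (Freyd.Q P).map ⟨X₁ j, ⟨X₂ j, h₁ j⟩⟩, fun i => ?_⟩
    simp only [← Functor.map_comp, ← Qsum]
    rw [Quotient.functor_map_eq_iff (freydRel P)]
    refine ⟨Z i, ?_⟩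
    simp only [valsum, FreydObj.comp_val]
    rw [h₂ i]
    abel
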